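/- Let d ≥ 2 and n ≥ 1 be integers and let a, b be d-ary strings of length n. Let S be a finite set of pairs (u,v) of d-ary strings of length n such that: (i) u ≠ a and v ≠ b for every (u,v) ∈ S; (ii) distinct elements of S have distinct first components and distinct second components; and (iii) every (u,v) ∈ S satisfies suf(u_{1..n−1}, a_{1..n−1}) + pre(v_{1..n−1}, b_{1..n−1}) ≥ n. Then |S| ≤ d^{⌈n/2⌉−1} + d^{⌊n/2⌋} − 2. -/

import Mathlib

/-- Length of the longest common prefix of the `(n-1)`-prefixes `s₁⋯s_{n-1}` and
`s'₁⋯s'_{n-1}` of two `d`-ary strings of length `n`: the largest `p ≤ n-1` such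
that `s i = s' i` for all (0-indexed) `i < p`. -/
def strPre (d n : ℕ) (s s' : Fin n → Fin d) : ℕ :=
  ((Finset.range n).filter (fun p => ∀ i : Fin n, (i : ℕ) < p → s i = s' i)).sup id

/-- Length of the longest common suffix of the `(n-1)`-prefixes `s₁⋯s_{n-1}` and
`s'₁⋯s'_{n-1}` of two `d`-ary strings of length `n`: the largest `q ≤ n-1` such
that `s i = s' i` for all (0-indexed) `i` with `n-1-q ≤ i < n-1`. -/
def strSuf (d n : ℕ) (s s' : Fin n → Fin d) : ℕ :=
  ((Finset.range n).filter
    (fun q => ∀ i : Fin n, n - 1 - q ≤ (i : ℕ) → (i : ℕ) < n - 1 → s i = s' i)).sup id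

lemma strSuf_le (d n : ℕ) (s s' : Fin n → Fin d) : strSuf d n s s' ≤ n - 1 := by
  apply Finset.sup_le
  intro b hb
  simp only [Finset.mem_filter, Finset.mem_range] at hb
  simp only [id]
  omega

lemma strPre_le (d n : ℕ) (s s' : Fin n → Fin d) : strPre d n s s' ≤ n - 1 := by
  apply Finset.sup_le
  intro b hb
  simp only [Finset.mem_filter, Finset.mem_range] at hb
  simp only [id]
  omega

lemma strSuf_spec (d n q₀ : ℕ) (hq0 : 1 ≤ q₀) (s s' : Fin n → Fin d)
    (h : q₀ ≤ strSuf d n s s') :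
    ∀ i : Fin n, n - 1 - q₀ ≤ (i : ℕ) → (i : ℕ) < n - 1 → s i = s' i := by
  set F := (Finset.range n).filter
    (fun q => ∀ i : Fin n, n - 1 - q ≤ (i : ℕ) → (i : ℕ) < n - 1 → s i = s' i) with hF
  have hne : F.Nonempty := by
    by_contra hc
    rw [Finset.not_nonempty_iff_eq_empty] at hc
    have : strSuf d n s s' = 0 := by rw [strSuf, ← hF, hc]; simp
    omega
  obtain ⟨q, hqF, hq⟩ := Finset.exists_mem_eq_sup F hne id
  simp only [Finset.mem_filter, Finset.mem_range, hF] at hqF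
  intro i hi1 hi2
  have hle : q₀ ≤ q := by have := h; rw [strSuf, ← hF, hq] at this; exact this
  exact hqF.2 i (by omega) hi2

lemma strPre_spec (d n p₀ : ℕ) (hp0 : 1 ≤ p₀) (s s' : Fin n → Fin d)
    (h : p₀ ≤ strPre d n s s') :
    ∀ i : Fin n, (i : ℕ) < p₀ → s i = s' i := by
  set F := (Finset.range n).filter
    (fun p => ∀ i : Fin n, (i : ℕ) < p → s i = s' i) with hF
  have hne : F.Nonempty := by
    by_contra hc
    rw [Finset.not_nonempty_iff_eq_empty] at hc
    have : strPre d n s s' = 0 := by rw [strPre, ← hF, hc]; simp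
    omega
  obtain ⟨p, hpF, hp⟩ := Finset.exists_mem_eq_sup F hne id
  simp only [Finset.mem_filter, Finset.mem_range, hF] at hpF
  intro i hi
  have hle : p₀ ≤ p := by have := h; rw [strPre, ← hF, hp] at this; exact this
  exact hpF.2 i (by omega)

/-- Counting lemma, suffix side. -/
lemma count_suf (d n q₀ : ℕ) (hn : 1 ≤ n) (hq : q₀ ≤ n - 1)
    (a : Fin n → Fin d) (T : Finset ((Fin n → Fin d) × (Fin n → Fin d)))
    (hne : ∀ p ∈ T, p.1 ≠ a)
    (hag : ∀ p ∈ T, ∀ i : Fin n, n - 1 - q₀ ≤ (i : ℕ) → (i : ℕ) < n - 1 → p.1 i = a i)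
    (hinj : ∀ p ∈ T, ∀ q ∈ T, p.1 = q.1 → p = q) :
    T.card ≤ d ^ (n - q₀) - 1 := by
  set m := n - q₀ with hm
  have hm1 : 1 ≤ m := by omega
  set emb : Fin m → Fin n := fun j =>
    ⟨if (j : ℕ) = m - 1 then n - 1 else (j : ℕ), by split <;> omega⟩ with hemb
  set Φ : (Fin n → Fin d) → (Fin m → Fin d) := fun u j => u (emb j) with hΦ
  have key : ∀ u u' : Fin n → Fin d,
      (∀ i : Fin n, n - 1 - q₀ ≤ (i : ℕ) → (i : ℕ) < n - 1 → u i = a i) →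
      (∀ i : Fin n, n - 1 - q₀ ≤ (i : ℕ) → (i : ℕ) < n - 1 → u' i = a i) →
      Φ u = Φ u' → u = u' := by
    intro u u' hu hu' h
    funext i
    have hlt : (i : ℕ) < n := i.isLt
    by_cases hcase : (i : ℕ) < n - 1 ∧ n - 1 - q₀ ≤ (i : ℕ)
    · rw [hu i hcase.2 hcase.1, hu' i hcase.2 hcase.1]
    · have hdisj : (i : ℕ) < m - 1 ∨ (i : ℕ) = n - 1 := by omega
      rcases hdisj with hi | hi
      · have hj : emb ⟨(i : ℕ), by omega⟩ = i := by
          apply Fin.ext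
          simp only [hemb, Fin.val_mk]
          rw [if_neg (by omega)]
        have hc := congrFun h ⟨(i : ℕ), by omega⟩
        simp only [hΦ] at hc
        rwa [hj] at hc
      · have hj : emb ⟨m - 1, by omega⟩ = i := by
          apply Fin.ext
          simp only [hemb, Fin.val_mk]
          simp only [if_true]
          omega
        have hc := congrFun h ⟨m - 1, by omega⟩
        simp only [hΦ] at hc
        rwa [hj] at hc
  have hcard := Finset.card_le_card_of_injOn (f := fun p => Φ p.1)
    (s := T) (t := Finset.univ.erase (Φ a)) ?_ ?_
  · calc T.card ≤ (Finset.univ.erase (Φ a)).card := hcard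
      _ = d ^ m - 1 := by
          rw [Finset.card_erase_of_mem (Finset.mem_univ _), Finset.card_univ]
          simp [Fintype.card_fun]
  · intro p hp
    rw [Finset.mem_coe, Finset.mem_erase]
    refine ⟨?_, Finset.mem_univ _⟩
    intro hcontra
    exact hne p hp (key p.1 a (hag p hp) (fun _ _ _ => rfl) hcontra)
  · intro p hp q hq h
    exact hinj p hp q hq (key p.1 q.1 (hag p hp) (hag q hq) h)

/-- Counting lemma, prefix side. -/
lemma count_pre (d n p₀ : ℕ) (hn : 1 ≤ n) (hp : p₀ ≤ n - 1)
    (b : Fin n → Fin d) (T : Finset ((Fin n → Fin d) × (Fin n → Fin d)))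
    (hne : ∀ p ∈ T, p.2 ≠ b)
    (hag : ∀ p ∈ T, ∀ i : Fin n, (i : ℕ) < p₀ → p.2 i = b i)
    (hinj : ∀ p ∈ T, ∀ q ∈ T, p.2 = q.2 → p = q) :
    T.card ≤ d ^ (n - p₀) - 1 := by
  set m := n - p₀ with hm
  have hm1 : 1 ≤ m := by omega
  set emb : Fin m → Fin n := fun j => ⟨p₀ + (j : ℕ), by omega⟩ with hemb
  set Φ : (Fin n → Fin d) → (Fin m → Fin d) := fun v j => v (emb j) with hΦ
  have key : ∀ v v' : Fin n → Fin d,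
      (∀ i : Fin n, (i : ℕ) < p₀ → v i = b i) →
      (∀ i : Fin n, (i : ℕ) < p₀ → v' i = b i) →
      Φ v = Φ v' → v = v' := by
    intro v v' hv hv' h
    funext i
    have hlt : (i : ℕ) < n := i.isLt
    rcases Nat.lt_or_ge (i : ℕ) p₀ with hi | hi
    · rw [hv i hi, hv' i hi]
    · have hj : emb ⟨(i : ℕ) - p₀, by omega⟩ = i := by
        apply Fin.ext
        simp only [hemb, Fin.val_mk]
        omega
      have hc := congrFun h ⟨(i : ℕ) - p₀, by omega⟩
      simp only [hΦ] at hc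
      rwa [hj] at hc
  have hcard := Finset.card_le_card_of_injOn (f := fun p => Φ p.2)
    (s := T) (t := Finset.univ.erase (Φ b)) ?_ ?_
  · calc T.card ≤ (Finset.univ.erase (Φ b)).card := hcard
      _ = d ^ m - 1 := by
          rw [Finset.card_erase_of_mem (Finset.mem_univ _), Finset.card_univ]
          simp [Fintype.card_fun]
  · intro p hp
    rw [Finset.mem_coe, Finset.mem_erase]
    refine ⟨?_, Finset.mem_univ _⟩
    intro hcontra
    exact hne p hp (key p.2 b (hag p hp) (fun _ _ => rfl) hcontra)
  · intro p hp q hq h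
    exact hinj p hp q hq (key p.2 q.2 (hag p hp) (hag q hq) h)

/-- Unicast SNB bound for the multilog network (Theorem 1 in Hwang 1998): a set
`S` of pairs `(u,v)` with `u ≠ a`, `v ≠ b`, pairwise distinct first and second
components, each pair link-blocking `(a,b)`
(`suf(u_{1..n-1},a_{1..n-1}) + pre(v_{1..n-1},b_{1..n-1}) ≥ n`), has
cardinality at most `d^{⌈n/2⌉-1} + d^{⌊n/2⌋} - 2`. -/
theorem stmt_12 (d n : ℕ) (hd : 2 ≤ d) (hn : 1 ≤ n) (a b : Fin n → Fin d)
    (S : Finset ((Fin n → Fin d) × (Fin n → Fin d)))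
    (h1 : ∀ p ∈ S, p.1 ≠ a ∧ p.2 ≠ b)
    (h2 : ∀ p ∈ S, ∀ q ∈ S, p ≠ q → p.1 ≠ q.1 ∧ p.2 ≠ q.2)
    (h3 : ∀ p ∈ S, n ≤ strSuf d n p.1 a + strPre d n p.2 b) :
    S.card ≤ d ^ ((n + 1) / 2 - 1) + d ^ (n / 2) - 2 := by
  classical
  obtain ⟨q₀, hq₀⟩ : ∃ x, x = n / 2 + 1 := ⟨_, rfl⟩
  obtain ⟨p₀, hp₀⟩ : ∃ x, x = (n + 1) / 2 := ⟨_, rfl⟩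
  set T₁ := S.filter (fun p => q₀ ≤ strSuf d n p.1 a) with hT₁
  set T₂ := S.filter (fun p => p₀ ≤ strPre d n p.2 b) with hT₂
  have hcover : S ⊆ T₁ ∪ T₂ := by
    intro p hp
    rw [Finset.mem_union, hT₁, hT₂, Finset.mem_filter, Finset.mem_filter]
    have := h3 p hp
    by_cases hc : q₀ ≤ strSuf d n p.1 a
    · exact Or.inl ⟨hp, hc⟩
    · exact Or.inr ⟨hp, by omega⟩
  have hinj1 : ∀ p ∈ T₁, ∀ q ∈ T₁, p.1 = q.1 → p = q := by
    intro p hp q hq h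
    rw [hT₁, Finset.mem_filter] at hp hq
    by_contra hc
    exact (h2 p hp.1 q hq.1 hc).1 h
  have hinj2 : ∀ p ∈ T₂, ∀ q ∈ T₂, p.2 = q.2 → p = q := by
    intro p hp q hq h
    rw [hT₂, Finset.mem_filter] at hp hq
    by_contra hc
    exact (h2 p hp.1 q hq.1 hc).2 h
  have hb1 : T₁.card ≤ d ^ (n - q₀) - 1 := by
    by_cases hq : q₀ ≤ n - 1
    · 
      refine count_suf d n q₀ hn hq a T₁ ?_ ?_ hinj1
      · intro p hp; rw [hT₁, Finset.mem_filter] at hp; exact (h1 p hp.1).1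
      · intro p hp
        rw [hT₁, Finset.mem_filter] at hp
        exact strSuf_spec d n q₀ (by omega) p.1 a hp.2
    · have : T₁ = ∅ := by
        rw [hT₁, Finset.filter_eq_empty_iff]
        intro p _
        have := strSuf_le d n p.1 a
        omega
      rw [this]
      simp
  have hb2 : T₂.card ≤ d ^ (n - p₀) - 1 := by
    by_cases hp : p₀ ≤ n - 1
    · 
      refine count_pre d n p₀ hn hp b T₂ ?_ ?_ hinj2
      · intro p hp'; rw [hT₂, Finset.mem_filter] at hp'; exact (h1 p hp'.1).2
      · intro p hp'
        rw [hT₂, Finset.mem_filter] at hp'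
        exact strPre_spec d n p₀ (by omega) p.2 b hp'.2
    · have : T₂ = ∅ := by
        rw [hT₂, Finset.filter_eq_empty_iff]
        intro p _
        have := strPre_le d n p.2 b
        omega
      rw [this]
      simp
  have h4 : S.card ≤ T₁.card + T₂.card :=
    le_trans (Finset.card_le_card hcover) (Finset.card_union_le _ _)
  have he1 : n - q₀ = (n + 1) / 2 - 1 := by omega
  have he2 : n - p₀ = n / 2 := by omega
  rw [he1] at hb1
  rw [he2] at hb2
  have hpow1 : 1 ≤ d ^ ((n + 1) / 2 - 1) := Nat.one_le_pow _ _ (by omega)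
  have hpow2 : 1 ≤ d ^ (n / 2) := Nat.one_le_pow _ _ (by omega)
  omega
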